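/- Under Hypothesis (H) and with the g-family as in the context: for every j ∈ {0,…,m−1}, every x ∈ C_j and every n ∈ ℕ, one has 0 < (λ^{nm}/‖g_j‖_∞) g_j(x) ≤ P^{nm}(x, C_j); and for every Borel set A ⊆ C_j, the continuous function x ↦ P^m(x,A) vanishes at every point of M∖C_j. -/

import Mathlib

open MeasureTheory Filter Topology

noncomputable section

variable {M : Type*}

/-- The iterated transition kernel: `iterP P 0 x = δ_x` (identity kernel), so that
`iterP P 1 = P` and `iterP P (n+1) x A = ∫ iterP P n y A ∂(P x)`. -/
def iterP [MeasurableSpace M] (P : M → Measure M) : ℕ → M → Measure M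
  | 0 => fun x => Measure.dirac x
  | n + 1 => fun x => (P x).bind (iterP P n)

lemma iterP_measurable [MeasurableSpace M] {P : M → Measure M} (hP : Measurable P) :
    ∀ n, Measurable (iterP P n)
  | 0 => by simpa [iterP] using Measure.measurable_dirac
  | (n + 1) => by
      simpa [iterP, Function.comp_def] using (Measure.measurable_bind' (iterP_measurable hP n)).comp hP

lemma iterP_apply [MeasurableSpace M] {P : M → Measure M} (hP : Measurable P) (n : ℕ) (x : M)
    {A : Set M} (hA : MeasurableSet A) :
    iterP P (n + 1) x A = ∫⁻ y, iterP P n y A ∂(P x) := by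
  simp only [iterP]
  exact Measure.bind_apply hA (iterP_measurable hP n).aemeasurable

lemma iterP_le_one [MeasurableSpace M] {P : M → Measure M} (hP : Measurable P)
    (hsub : ∀ x, P x Set.univ ≤ 1) : ∀ (n : ℕ) (x : M) (s : Set M), iterP P n x s ≤ 1 := by
  intro n
  induction n with
  | zero =>
    intro x s
    calc iterP P 0 x s ≤ iterP P 0 x Set.univ := measure_mono (Set.subset_univ s)
      _ = 1 := by simp [iterP]
  | succ n ih =>
    intro x s
    calc iterP P (n + 1) x s ≤ iterP P (n + 1) x Set.univ := measure_mono (Set.subset_univ s)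
      _ = ∫⁻ y, iterP P n y Set.univ ∂(P x) := iterP_apply hP n x MeasurableSet.univ
      _ ≤ ∫⁻ _, 1 ∂(P x) := lintegral_mono fun y => ih y Set.univ
      _ = P x Set.univ := lintegral_one
      _ ≤ 1 := hsub x

lemma pow_apply_nonneg_eq
    [MetricSpace M] [CompactSpace M] [MeasurableSpace M] [BorelSpace M]
    {P : M → Measure M} (hP : Measurable P) (hsub : ∀ x, P x Set.univ ≤ 1)
    (T : C(M, ℝ) →L[ℝ] C(M, ℝ)) (hT : ∀ (f : C(M, ℝ)) (x : M), T f x = ∫ y, f y ∂(P x))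
    (f : C(M, ℝ)) (hf : ∀ x, 0 ≤ f x) :
    ∀ (n : ℕ) (x : M), 0 ≤ (T ^ n) f x ∧
      ENNReal.ofReal ((T ^ n) f x) = ∫⁻ y, ENNReal.ofReal (f y) ∂(iterP P n x) := by
  intro n
  induction n with
  | zero =>
    intro x
    simp only [pow_zero, ContinuousLinearMap.one_apply]
    refine ⟨hf x, ?_⟩
    have : iterP P 0 x = Measure.dirac x := by simp [iterP]
    rw [this]
    exact (lintegral_dirac' x ((map_continuous f).measurable.ennreal_ofReal)).symm
  | succ n ih =>
    intro x
    have hTn : (T ^ (n + 1)) f = T ((T ^ n) f) := by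
      rw [pow_succ', ContinuousLinearMap.mul_apply]
    have hnn : ∀ y, 0 ≤ (T ^ n) f y := fun y => (ih y).1
    have hval : (T ^ (n + 1)) f x
        = (∫⁻ y, ENNReal.ofReal (((T ^ n) f) y) ∂(P x)).toReal := by
      rw [hTn, hT]
      exact integral_eq_lintegral_of_nonneg_ae (Eventually.of_forall hnn)
        ((T ^ n) f).continuous.aestronglyMeasurable
    have hfin : (∫⁻ y, ENNReal.ofReal (((T ^ n) f) y) ∂(P x)) ≠ ⊤ := by
      have hb : (∫⁻ y, ENNReal.ofReal (((T ^ n) f) y) ∂(P x))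
          ≤ ENNReal.ofReal ‖(T ^ n) f‖ * P x Set.univ := by
        rw [← lintegral_const]
        exact lintegral_mono fun y => ENNReal.ofReal_le_ofReal
          ((Real.le_norm_self _).trans (((T ^ n) f).norm_coe_le_norm y))
      exact (hb.trans_lt (by
        calc ENNReal.ofReal ‖(T ^ n) f‖ * P x Set.univ
            ≤ ENNReal.ofReal ‖(T ^ n) f‖ * 1 := mul_le_mul_right (hsub x) _
          _ < ⊤ := by simp [ENNReal.ofReal_lt_top])).ne
    refine ⟨hval ▸ ENNReal.toReal_nonneg, ?_⟩
    rw [hval, ENNReal.ofReal_toReal hfin]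
    have hcongr : ∀ y, ENNReal.ofReal (((T ^ n) f) y)
        = ∫⁻ z, ENNReal.ofReal (f z) ∂(iterP P n y) := fun y => (ih y).2
    rw [lintegral_congr hcongr]
    have : iterP P (n + 1) x = (P x).bind (iterP P n) := by simp [iterP]
    rw [this]
    exact (Measure.lintegral_bind (iterP_measurable hP n).aemeasurable
      ((map_continuous f).measurable.ennreal_ofReal.aemeasurable)).symm
/-- Hypothesis (H) of the paper: `P` is a measurable sub-Markovian kernel; (H1) each
`P x` is absolutely continuous w.r.t. `ρ` and `x ↦ dP(x,·)/dρ` is continuous into `L¹(ρ)`;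
(H2) `ρ(M∖Z) > 0` where `Z = {x | P(x,M) = 0}`, and from every non-escaping point every
nonempty open set is reached with positive probability in some positive time. -/
structure HypH [MetricSpace M] [MeasurableSpace M] (P : M → Measure M) (ρ : Measure M) : Prop where
  meas : Measurable P
  subMarkov : ∀ x, P x Set.univ ≤ 1
  absCont : ∀ x, P x ≪ ρ
  densityCont : ∀ ε : ℝ, 0 < ε → ∃ δ : ℝ, 0 < δ ∧ ∀ x z : M, dist x z < δ →
      (∫⁻ y, ((P x).rnDeriv ρ y - (P z).rnDeriv ρ y)
        + ((P z).rnDeriv ρ y - (P x).rnDeriv ρ y) ∂ρ) < ENNReal.ofReal ε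
  rhoPos : 0 < ρ {x | P x Set.univ ≠ 0}
  irred : ∀ x, P x Set.univ ≠ 0 → ∀ A : Set M, IsOpen A → A.Nonempty →
      ∃ n : ℕ, 0 < n ∧ 0 < iterP P n x A

/-- The complexification of a real-valued continuous function. -/
def toC [TopologicalSpace M] (f : C(M, ℝ)) : C(M, ℂ) :=
  ⟨fun x => (f x : ℂ), Complex.continuous_ofReal.comp f.continuous⟩

/-- **Proposition (cyclic classes are invariant).** Under Hypothesis (H) and with the
`g`-family of eigenfunctions of `𝒫^m` (supports `C_j = {g_j ≠ 0}` partitioning `M∖Z`):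
for every `j`, every `x ∈ C_j` and every `n`,
`0 < (λ^{nm}/‖g_j‖) g_j(x) ≤ P^{nm}(x, C_j)`; and for every Borel `A ⊆ C_j` the
continuous function `x ↦ P^m(x,A)` vanishes at every point of `M∖C_j`. -/
theorem cyclic_classes_invariant_of_hypH
    [MetricSpace M] [CompactSpace M] [MeasurableSpace M] [BorelSpace M]
    (ρ : Measure M) [IsFiniteMeasure ρ] (P : M → Measure M) (hH : HypH P ρ)
    (T : C(M, ℝ) →L[ℝ] C(M, ℝ)) (hT : ∀ (f : C(M, ℝ)) (x : M), T f x = ∫ y, f y ∂(P x))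
    (Tc : C(M, ℂ) →L[ℂ] C(M, ℂ)) (hTc : ∀ (f : C(M, ℂ)) (x : M), Tc f x = ∫ y, f y ∂(P x))
    (lam : ℝ) (hlam0 : 0 ≤ lam) (hlam : spectralRadius ℝ T = ENNReal.ofReal lam)
    (m : ℕ)
    (hm : {z : ℂ | Module.End.HasEigenvalue (Tc : C(M, ℂ) →ₗ[ℂ] C(M, ℂ)) z ∧
        ‖z‖ = lam}.ncard = m)
    (hm1 : 0 < m)
    (g : Fin m → C(M, ℝ)) (hg0 : ∀ (j : Fin m) (x : M), 0 ≤ g j x)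
    (hgeig : ∀ j : Fin m, (T ^ m) (g j) = lam ^ m • g j)
    (hgspan : Submodule.span ℂ (Set.range fun j => toC (g j)) =
      Module.End.eigenspace ((Tc ^ m : C(M, ℂ) →L[ℂ] C(M, ℂ)) : C(M, ℂ) →ₗ[ℂ] C(M, ℂ))
        ((lam : ℂ) ^ m))
    (hgdisj : Pairwise fun i j : Fin m => Disjoint {x : M | g i x ≠ 0} {x : M | g j x ≠ 0})
    (hgunion : (⋃ j, {x : M | g j x ≠ 0}) = {x : M | P x Set.univ ≠ 0})
    : (∀ (j : Fin m) (x : M), g j x ≠ 0 → ∀ n : ℕ,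
        0 < lam ^ (n * m) / ‖g j‖ * g j x ∧
        ENNReal.ofReal (lam ^ (n * m) / ‖g j‖ * g j x) ≤ iterP P (n * m) x {y | g j y ≠ 0}) ∧
      (∀ (j : Fin m) (A : Set M), A ⊆ {y | g j y ≠ 0} → MeasurableSet A →
        Continuous (fun x => (iterP P m x A).toReal) ∧
        ∀ x : M, g j x = 0 → iterP P m x A = 0) := by
  have hP := hH.meas
  have hsub := hH.subMarkov
  have key := pow_apply_nonneg_eq hP hsub T hT
  -- eigenvalue iteration
  have heig : ∀ (j : Fin m) (n : ℕ), (T ^ (n * m)) (g j) = (lam ^ (n * m)) • g j := by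
    intro j n
    induction n with
    | zero => simp
    | succ n ih =>
      have hnm : (n + 1) * m = m + n * m := by ring
      rw [hnm, pow_add, pow_add, ContinuousLinearMap.mul_apply, ih, ContinuousLinearMap.map_smul, hgeig j,
        smul_smul, mul_comm]
  -- positivity of lam whenever some g j is somewhere nonzero
  have hlampos : ∀ (j : Fin m) (x : M), g j x ≠ 0 → 0 < lam := by
    intro j x hx
    rcases lt_or_eq_of_le hlam0 with h | h
    · exact h
    exfalso
    have hl0 : lam = 0 := h.symm
    have hTm : (T ^ m) (g j) = 0 := by
      rw [hgeig j, hl0, zero_pow hm1.ne', zero_smul]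
    have hZ : P x Set.univ ≠ 0 := by
      have hmem : x ∈ ⋃ i, {x : M | g i x ≠ 0} := Set.mem_iUnion.mpr ⟨j, hx⟩
      rw [hgunion] at hmem
      exact hmem
    have pump : ∀ N : ℕ, ∃ n, N ≤ n ∧ 0 < (T ^ n) (g j) x := by
      intro N
      induction N with
      | zero =>
        refine ⟨0, le_refl 0, ?_⟩
        simp only [pow_zero, ContinuousLinearMap.one_apply]
        exact lt_of_le_of_ne (hg0 j x) (Ne.symm hx)
      | succ N ih =>
        obtain ⟨n, hNn, hn⟩ := ih
        set h := (T ^ n) (g j) with hdef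
        have hnn : ∀ y, 0 ≤ h y := fun y => (key (g j) (hg0 j) n y).1
        have hUopen : IsOpen {y : M | 0 < h y} := isOpen_lt continuous_const h.continuous
        obtain ⟨k, hk0, hkpos⟩ := hH.irred x hZ _ hUopen ⟨x, hn⟩
        have hmeas : Measurable fun y => ENNReal.ofReal (h y) :=
          (map_continuous h).measurable.ennreal_ofReal
        have h2 : 0 < ∫⁻ y, ENNReal.ofReal (h y) ∂(iterP P k x) := by
          refine pos_iff_ne_zero.mpr fun h0 => ?_
          have h4 := (lintegral_eq_zero_iff hmeas).1 h0
          rw [Filter.EventuallyEq, ae_iff] at h4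
          have h5 : iterP P k x {y : M | 0 < h y} = 0 := by
            refine measure_mono_null (fun y hy => ?_) h4
            simpa using (ENNReal.ofReal_pos.mpr hy).ne'
          exact hkpos.ne' h5
        have h3 := (key h hnn k x).2
        rw [← h3] at h2
        refine ⟨k + n, by omega, ?_⟩
        have h4 : (T ^ (k + n)) (g j) = (T ^ k) h := by
          rw [pow_add, ContinuousLinearMap.mul_apply]
        rw [h4]
        exact ENNReal.ofReal_pos.mp h2
    obtain ⟨n, hn, hpos⟩ := pump m
    have hzero : (T ^ n) (g j) = 0 := by
      have hsplit : n = (n - m) + m := (Nat.sub_add_cancel hn).symm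
      rw [hsplit, pow_add, ContinuousLinearMap.mul_apply, hTm, map_zero]
    rw [hzero] at hpos
    simp at hpos
  constructor
  · -- first conclusion
    intro j x hx n
    have hlp := hlampos j x hx
    have hgx : 0 < g j x := lt_of_le_of_ne (hg0 j x) (Ne.symm hx)
    have hgne : g j ≠ 0 := fun h => hx (by rw [h]; rfl)
    have hnorm : 0 < ‖g j‖ := norm_pos_iff.mpr hgne
    refine ⟨mul_pos (div_pos (pow_pos hlp _) hnorm) hgx, ?_⟩
    have hval : (T ^ (n * m)) (g j) x = lam ^ (n * m) * g j x := by
      rw [heig j n]; rfl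
    have h2 := (key (g j) (hg0 j) (n * m) x).2
    rw [hval] at h2
    have hCopen : IsOpen {y : M | g j y ≠ 0} := isOpen_ne.preimage (map_continuous (g j))
    have hbound : (∫⁻ y, ENNReal.ofReal (g j y) ∂(iterP P (n * m) x))
        ≤ ENNReal.ofReal ‖g j‖ * iterP P (n * m) x {y : M | g j y ≠ 0} := by
      have hpt : ∀ y, ENNReal.ofReal (g j y)
          ≤ {y : M | g j y ≠ 0}.indicator (fun _ => ENNReal.ofReal ‖g j‖) y := by
        intro y
        by_cases hy : g j y ≠ 0
        · rw [Set.indicator_of_mem (show y ∈ {y : M | g j y ≠ 0} from hy)]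
          exact ENNReal.ofReal_le_ofReal
            ((Real.le_norm_self _).trans ((g j).norm_coe_le_norm y))
        · rw [Set.indicator_of_notMem (show y ∉ {y : M | g j y ≠ 0} from hy)]
          simp [not_not.mp hy]
      calc (∫⁻ y, ENNReal.ofReal (g j y) ∂(iterP P (n * m) x))
          ≤ ∫⁻ y, {y : M | g j y ≠ 0}.indicator (fun _ => ENNReal.ofReal ‖g j‖) y
              ∂(iterP P (n * m) x) := lintegral_mono hpt
        _ = ENNReal.ofReal ‖g j‖ * iterP P (n * m) x {y : M | g j y ≠ 0} := by
            rw [lintegral_indicator hCopen.measurableSet, setLIntegral_const]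
    have hform : lam ^ (n * m) / ‖g j‖ * g j x = lam ^ (n * m) * g j x / ‖g j‖ := by ring
    rw [hform, ENNReal.ofReal_div_of_pos hnorm, h2]
    exact ENNReal.div_le_of_le_mul' hbound
  · -- second conclusion
    intro j A hA hAm
    obtain ⟨k, hk⟩ : ∃ k, m = k + 1 := ⟨m - 1, (Nat.succ_pred_eq_of_pos hm1).symm⟩
    constructor
    · -- continuity
      rw [Metric.continuous_iff]
      intro x ε hε
      obtain ⟨δ, hδ, hδ2⟩ := hH.densityCont ε hε
      refine ⟨δ, hδ, fun z hz => ?_⟩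
      have hmeas_h : Measurable fun y => iterP P k y A :=
        (Measure.measurable_coe hAm).comp (iterP_measurable hP k)
      have hF : ∀ w : M, iterP P m w A
          = ∫⁻ y, (P w).rnDeriv ρ y * iterP P k y A ∂ρ := by
        intro w
        have : IsFiniteMeasure (P w) := ⟨lt_of_le_of_lt (hsub w) ENNReal.one_lt_top⟩
        rw [hk, iterP_apply hP k w hAm,
          lintegral_rnDeriv_mul (hH.absCont w) hmeas_h.aemeasurable]
      have hle : ∀ u v : M, iterP P m u A ≤ iterP P m v A
          + ∫⁻ y, ((P u).rnDeriv ρ y - (P v).rnDeriv ρ y)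
              + ((P v).rnDeriv ρ y - (P u).rnDeriv ρ y) ∂ρ := by
        intro u v
        rw [hF u, hF v]
        have hpt : ∀ y, (P u).rnDeriv ρ y * iterP P k y A
            ≤ (P v).rnDeriv ρ y * iterP P k y A
              + (((P u).rnDeriv ρ y - (P v).rnDeriv ρ y)
                + ((P v).rnDeriv ρ y - (P u).rnDeriv ρ y)) := by
          intro y
          calc (P u).rnDeriv ρ y * iterP P k y A
              ≤ ((P v).rnDeriv ρ y + ((P u).rnDeriv ρ y - (P v).rnDeriv ρ y))
                  * iterP P k y A := mul_le_mul_left le_add_tsub _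
            _ = (P v).rnDeriv ρ y * iterP P k y A
                + ((P u).rnDeriv ρ y - (P v).rnDeriv ρ y) * iterP P k y A := add_mul _ _ _
            _ ≤ (P v).rnDeriv ρ y * iterP P k y A
                + ((P u).rnDeriv ρ y - (P v).rnDeriv ρ y) * 1 :=
                add_le_add_right (mul_le_mul_right (iterP_le_one hP hsub k y A) _) _
            _ = (P v).rnDeriv ρ y * iterP P k y A
                + ((P u).rnDeriv ρ y - (P v).rnDeriv ρ y) := by rw [mul_one]
            _ ≤ _ := add_le_add_right le_self_add _
        calc (∫⁻ y, (P u).rnDeriv ρ y * iterP P k y A ∂ρ)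
            ≤ ∫⁻ y, (P v).rnDeriv ρ y * iterP P k y A
                + (((P u).rnDeriv ρ y - (P v).rnDeriv ρ y)
                  + ((P v).rnDeriv ρ y - (P u).rnDeriv ρ y)) ∂ρ := lintegral_mono hpt
          _ = _ := lintegral_add_left ((Measure.measurable_rnDeriv _ _).mul hmeas_h) _
      have hfin : ∀ w : M, iterP P m w A ≠ ⊤ :=
        fun w => ((iterP_le_one hP hsub m w A).trans_lt ENNReal.one_lt_top).ne
      have hDzx := hδ2 z x hz
      have hDxz := hδ2 x z (by rwa [dist_comm])
      rw [Real.dist_eq, abs_sub_lt_iff]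
      have hstep : ∀ u v : M,
          (∫⁻ y, ((P u).rnDeriv ρ y - (P v).rnDeriv ρ y)
            + ((P v).rnDeriv ρ y - (P u).rnDeriv ρ y) ∂ρ) < ENNReal.ofReal ε →
          (iterP P m u A).toReal - (iterP P m v A).toReal < ε := by
        intro u v hD
        set D := ∫⁻ y, ((P u).rnDeriv ρ y - (P v).rnDeriv ρ y)
            + ((P v).rnDeriv ρ y - (P u).rnDeriv ρ y) ∂ρ with hDdef
        have hDfin : D ≠ ⊤ := (hD.trans ENNReal.ofReal_lt_top).ne
        have h1 := ENNReal.toReal_mono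
          (ENNReal.add_ne_top.mpr ⟨hfin v, hDfin⟩) (hle u v)
        rw [ENNReal.toReal_add (hfin v) hDfin] at h1
        have hDr : D.toReal < ε := (ENNReal.lt_ofReal_iff_toReal_lt hDfin).mp hD
        linarith
      exact ⟨hstep z x hDzx, hstep x z hDxz⟩
    · -- vanishing outside C_j
      intro x hx
      have h2 := (key (g j) (hg0 j) m x).2
      have hval : (T ^ m) (g j) x = 0 := by
        rw [hgeig j]
        simp [hx]
      rw [hval, ENNReal.ofReal_zero] at h2
      have hmeas : Measurable fun y => ENNReal.ofReal (g j y) :=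
        (map_continuous (g j)).measurable.ennreal_ofReal
      have h4 := (lintegral_eq_zero_iff hmeas).1 h2.symm
      rw [Filter.EventuallyEq, ae_iff] at h4
      have hnull : iterP P m x {y : M | g j y ≠ 0} = 0 := by
        refine measure_mono_null (fun y hy => ?_) h4
        simpa using (ENNReal.ofReal_pos.mpr (lt_of_le_of_ne (hg0 j y) (Ne.symm hy))).ne'
      exact measure_mono_null hA hnull
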